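/- Let φ : N → M be a proper analytic map between real analytic manifolds. Then the image φ(N) is a subanalytic subset of M. -/

import Mathlib

open Filter Topology Set
noncomputable section

namespace Paper

variable {K : Type} [RCLike K]

/-! ### Ranks of analytic maps between Euclidean spaces -/

/-- The rank of the differential of `f` at the point `q`. -/
def diffRank {m n : ℕ} (f : (Fin m → K) → (Fin n → K)) (q : Fin m → K) : ℕ :=
  Module.finrank K (LinearMap.range ((fderiv K f q : (Fin m → K) →L[K] (Fin n → K)) :
    (Fin m → K) →ₗ[K] (Fin n → K)))

/-- The generic rank of `f` at `p` : the maximum, over points `q` in arbitrarily small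
neighborhoods of `p`, of the rank of the differential of `f` at `q`. -/
def genericRank {m n : ℕ} (f : (Fin m → K) → (Fin n → K)) (p : Fin m → K) : ℕ :=
  sInf { r : ℕ | ∃ U ∈ 𝓝 p, r = sSup (diffRank f '' U) }

/-- Partial derivative in the direction of the `j`-th coordinate. -/
def pderivK {m : ℕ} (j : Fin m) (f : (Fin m → K) → K) : (Fin m → K) → K :=
  fun q => fderiv K f q (Pi.single j 1)

/-- Iterated partial derivative in the direction of the `j`-th coordinate. -/
def pderivIter {m : ℕ} (j : Fin m) : ℕ → ((Fin m → K) → K) → ((Fin m → K) → K)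
  | 0, f => f
  | k + 1, f => pderivK j (pderivIter j k f)

/-- Iterated partial derivative `∂^γ`. -/
def mpderiv {m : ℕ} (γ : Fin m →₀ ℕ) (f : (Fin m → K) → K) : (Fin m → K) → K :=
  (List.finRange m).foldr (fun j g => pderivIter j (γ j) g) f

/-- Taylor coefficient `(1/γ!) ∂^γ f (p)`. -/
def taylorCoeff {m : ℕ} (f : (Fin m → K) → K) (p : Fin m → K) (γ : Fin m →₀ ℕ) : K :=
  (((∏ j, Nat.factorial (γ j) : ℕ) : K))⁻¹ * mpderiv γ f p

/-- The Taylor series of `f` at `p`, as a formal multivariate power series. -/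
def taylorSeriesAt {m : ℕ} (f : (Fin m → K) → K) (p : Fin m → K) :
    MvPowerSeries (Fin m) K :=
  fun γ => taylorCoeff f p γ

/-- The exponent `δ ↦ N` with all coordinates equal to `N`. -/
def expBound (n N : ℕ) : Fin n →₀ ℕ := Finsupp.equivFunOnFinite.symm (fun _ => N)

/-- Substitution of the family of power series `a` (each having zero constant term) in the
power series `F`.  The coefficient of `u^γ` in `F(a)` is
`∑ over δ of (coeff δ F) * coeff γ (a^δ)`; only exponents `δ` with `|δ| ≤ |γ|` contribute. -/
def msubst {R : Type*} [CommRing R] {m n : ℕ} (a : Fin n → MvPowerSeries (Fin m) R)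
    (F : MvPowerSeries (Fin n) R) : MvPowerSeries (Fin m) R :=
  fun γ => ∑ δ ∈ Finset.Iic (expBound n (γ.sum fun _ e => e)),
      (MvPowerSeries.coeff δ F) * MvPowerSeries.coeff γ (∏ i, a i ^ δ i)

/-- The Krull dimension of the set of prime ideals containing `S`; when `S` is an ideal of `R`,
this is the Krull dimension of the quotient ring `R/S`. -/
def dimOfPrimesOver {R : Type*} [CommRing R] (S : Set R) : WithBot ℕ∞ :=
  Order.krullDim { p : PrimeSpectrum R // S ⊆ p.asIdeal }

/-- The germ of `f` at `p`, translated so that it maps `0` to `0`. -/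
def centered {m n : ℕ} (f : (Fin m → K) → (Fin n → K)) (p : Fin m → K) :
    (Fin m → K) → (Fin n → K) :=
  fun u => f (p + u) - f p

/-- The kernel of the morphism `K⟦x₁,…,xₙ⟧ → K⟦u₁,…,u_m⟧` obtained by substituting the Taylor
expansions at `p` of the components of `f` (in coordinates centred at `p` and `f p`). -/
def formalKer {m n : ℕ} (f : (Fin m → K) → (Fin n → K)) (p : Fin m → K) :
    Set (MvPowerSeries (Fin n) K) :=
  { F | msubst (fun i => taylorSeriesAt (fun u => centered f p u i) 0) F = 0 }

/-- The formal rank of `f` at `p` : the Krull dimension of `K⟦x⟧/ker(f̂*_p)`. -/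
def formalRank {m n : ℕ} (f : (Fin m → K) → (Fin n → K)) (p : Fin m → K) : WithBot ℕ∞ :=
  dimOfPrimesOver (formalKer f p)

/-- `f` is regular at `p` in the sense of Gabrielov if its generic rank equals its formal
rank at `p`. -/
def GabrielovRegularAt {m n : ℕ} (f : (Fin m → K) → (Fin n → K)) (p : Fin m → K) : Prop :=
  (genericRank f p : WithBot ℕ∞) = formalRank f p

/-! ### Rings of germs of analytic functions and the analytic rank -/

/-- The ring `O_p` of germs at `p` of `K`-analytic functions, as a subring of the ring of all
germs of functions at `p`. -/
def analyticGermRing (K : Type) [RCLike K] {m : ℕ} (p : Fin m → K) :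
    Subring ((𝓝 p).Germ K) where
  carrier := { g | ∃ f : (Fin m → K) → K, AnalyticAt K f p ∧ g = (f : (𝓝 p).Germ K) }
  mul_mem' := by
    rintro a b ⟨f, hf, rfl⟩ ⟨g, hg, rfl⟩
    exact ⟨f * g, hf.mul hg, (Filter.Germ.coe_mul f g).symm⟩
  one_mem' := ⟨1, analyticAt_const, rfl⟩
  add_mem' := by
    rintro a b ⟨f, hf, rfl⟩ ⟨g, hg, rfl⟩
    exact ⟨f + g, hf.add hg, (Filter.Germ.coe_add f g).symm⟩
  zero_mem' := ⟨0, analyticAt_const, rfl⟩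
  neg_mem' := by
    rintro a ⟨f, hf, rfl⟩
    exact ⟨-f, hf.neg, (Filter.Germ.coe_neg f).symm⟩

/-- The kernel of the pullback morphism `f*_p : O_{f(p)} → O_p`, `g ↦ g ∘ f`. -/
def analyticKer {m n : ℕ} (f : (Fin m → K) → (Fin n → K)) (p : Fin m → K) :
    Set ↥(analyticGermRing K (f p)) :=
  { g | ∃ h : (Fin n → K) → K, AnalyticAt K h (f p) ∧
        (g : (𝓝 (f p)).Germ K) = (h : (𝓝 (f p)).Germ K) ∧ ∀ᶠ x in 𝓝 p, h (f x) = 0 }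

/-- The analytic rank of `f` at `p` : the Krull dimension of `O_{f(p)}/ker(f*_p)`. -/
def analyticRank {m n : ℕ} (f : (Fin m → K) → (Fin n → K)) (p : Fin m → K) : WithBot ℕ∞ :=
  dimOfPrimesOver (analyticKer f p)

/-! ### Analytic manifolds, modeled on `Fin l → K`, via charted spaces -/

/-- The image of the point `a` in the chart at `a`. -/
def chBase (K : Type) [RCLike K] (l : ℕ) {M : Type*} [TopologicalSpace M]
    [ChartedSpace (Fin l → K) M] (a : M) : Fin l → K :=
  chartAt (Fin l → K) a a

/-- The local representative of `f : M → N` in the charts at `a` and `f a`. -/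
def chRep (K : Type) [RCLike K] (l l' : ℕ) {M N : Type*} [TopologicalSpace M]
    [ChartedSpace (Fin l → K) M] [TopologicalSpace N] [ChartedSpace (Fin l' → K) N]
    (f : M → N) (a : M) : (Fin l → K) → (Fin l' → K) :=
  (chartAt (Fin l' → K) (f a)) ∘ f ∘ (chartAt (Fin l → K) a).symm

/-- `M` is a `K`-analytic manifold: all transition maps of the atlas are analytic. -/
def AnalyticCharts (K : Type) [RCLike K] (l : ℕ) (M : Type*) [TopologicalSpace M]
    [ChartedSpace (Fin l → K) M] : Prop :=
  ∀ x y : M, ∀ z ∈ (chartAt (Fin l → K) x).target ∩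
      ((chartAt (Fin l → K) x).symm ⁻¹' (chartAt (Fin l → K) y).source),
    AnalyticAt K ((chartAt (Fin l → K) y) ∘ (chartAt (Fin l → K) x).symm) z

/-- A map between analytic manifolds is analytic at `a` if it is continuous at `a` and its local
representative in charts is analytic. -/
def MAnalyticAt (K : Type) [RCLike K] (l l' : ℕ) {M N : Type*} [TopologicalSpace M]
    [ChartedSpace (Fin l → K) M] [TopologicalSpace N] [ChartedSpace (Fin l' → K) N]
    (f : M → N) (a : M) : Prop :=
  ContinuousAt f a ∧ AnalyticAt K (chRep K l l' f a) (chBase K l a)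

/-- A `K`-valued function on a manifold is analytic at `a` if its representative in the chart
at `a` is analytic. -/
def MAnalyticFunAt {K : Type} [RCLike K] (l : ℕ) {M : Type*} [TopologicalSpace M]
    [ChartedSpace (Fin l → K) M] (f : M → K) (a : M) : Prop :=
  AnalyticAt K (f ∘ (chartAt (Fin l → K) a).symm) (chBase K l a)

/-- `f : M → N` is regular at `a` in the sense of Gabrielov: its generic rank at `a` equals its
formal rank at `a` (both computed on its local representative in charts). -/
def MRegularAt (K : Type) [RCLike K] (l l' : ℕ) {M N : Type*} [TopologicalSpace M]
    [ChartedSpace (Fin l → K) M] [TopologicalSpace N] [ChartedSpace (Fin l' → K) N]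
    (f : M → N) (a : M) : Prop :=
  GabrielovRegularAt (chRep K l l' f a) (chBase K l a)

/-- The generic rank of `f : M → N` at `a`. -/
def mgenericRank (K : Type) [RCLike K] (l l' : ℕ) {M N : Type*} [TopologicalSpace M]
    [ChartedSpace (Fin l → K) M] [TopologicalSpace N] [ChartedSpace (Fin l' → K) N]
    (f : M → N) (a : M) : ℕ :=
  genericRank (chRep K l l' f a) (chBase K l a)

/-- The formal rank of `f : M → N` at `a`. -/
def mformalRank (K : Type) [RCLike K] (l l' : ℕ) {M N : Type*} [TopologicalSpace M]
    [ChartedSpace (Fin l → K) M] [TopologicalSpace N] [ChartedSpace (Fin l' → K) N]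
    (f : M → N) (a : M) : WithBot ℕ∞ :=
  formalRank (chRep K l l' f a) (chBase K l a)

/-- The analytic rank of `f : M → N` at `a`. -/
def manalyticRank (K : Type) [RCLike K] (l l' : ℕ) {M N : Type*} [TopologicalSpace M]
    [ChartedSpace (Fin l → K) M] [TopologicalSpace N] [ChartedSpace (Fin l' → K) N]
    (f : M → N) (a : M) : WithBot ℕ∞ :=
  analyticRank (chRep K l l' f a) (chBase K l a)

/-- A subset `Z` of a manifold `M` is an analytic subset if every point of `M` has an open
neighborhood `U` and finitely many analytic functions on `U` whose common zero set is `Z ∩ U`. -/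
def IsAnalyticSet (K : Type) [RCLike K] (l : ℕ) {M : Type*} [TopologicalSpace M]
    [ChartedSpace (Fin l → K) M] (Z : Set M) : Prop :=
  ∀ a : M, ∃ U : Set M, IsOpen U ∧ a ∈ U ∧ ∃ s : ℕ, ∃ f : Fin s → M → K,
    (∀ i, ∀ x ∈ U, MAnalyticFunAt l (f i) x) ∧ Z ∩ U = { x ∈ U | ∀ i, f i x = 0 }

/-- A subset `Z` of an open set `Ω ⊆ K^m` is an analytic subset of `Ω`. -/
def IsAnalyticSubsetIn {K : Type} [RCLike K] {m : ℕ} (Ω Z : Set (Fin m → K)) : Prop :=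
  Z ⊆ Ω ∧ ∀ p ∈ Ω, ∃ V : Set (Fin m → K), IsOpen V ∧ p ∈ V ∧ V ⊆ Ω ∧
    ∃ s : ℕ, ∃ f : Fin s → (Fin m → K) → K,
      (∀ i, ∀ x ∈ V, AnalyticAt K (f i) x) ∧ Z ∩ V = { x ∈ V | ∀ i, f i x = 0 }

/-- A proper map: preimages of compact sets are compact. -/
def ProperMap {M N : Type*} [TopologicalSpace M] [TopologicalSpace N] (f : M → N) : Prop :=
  ∀ C : Set N, IsCompact C → IsCompact (f ⁻¹' C)

/-! ### Semianalytic and subanalytic subsets of real analytic manifolds -/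

section Real

variable (l : ℕ) {M : Type*} [TopologicalSpace M] [ChartedSpace (Fin l → ℝ) M]

/-- A semianalytic subset of a real analytic manifold. -/
def Semianalytic (X : Set M) : Prop :=
  ∀ a : M, ∃ U : Set M, IsOpen U ∧ a ∈ U ∧ ∃ p q : ℕ,
    ∃ f : Fin p → M → ℝ, ∃ g : Fin p → Fin q → M → ℝ,
      (∀ i, ∀ x ∈ U, MAnalyticFunAt l (f i) x) ∧
      (∀ i j, ∀ x ∈ U, MAnalyticFunAt l (g i j) x) ∧
      X ∩ U = ⋃ i, { x ∈ U | f i x = 0 ∧ ∀ j, 0 < g i j x }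

/-- Analyticity at a point for real valued functions on `M × ℝ^q` (chart on the first factor,
identity on the second). -/
def ProdAnalyticFunAt {q : ℕ} (f : M × (Fin q → ℝ) → ℝ) (z : M × (Fin q → ℝ)) : Prop :=
  AnalyticAt ℝ (fun y : (Fin l → ℝ) × (Fin q → ℝ) => f ((chartAt (Fin l → ℝ) z.1).symm y.1, y.2))
    (chartAt (Fin l → ℝ) z.1 z.1, z.2)

/-- A semianalytic subset of `M × ℝ^q`. -/
def SemianalyticProd {q : ℕ} (S : Set (M × (Fin q → ℝ))) : Prop :=
  ∀ a : M × (Fin q → ℝ), ∃ U : Set (M × (Fin q → ℝ)), IsOpen U ∧ a ∈ U ∧ ∃ p r : ℕ,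
    ∃ f : Fin p → M × (Fin q → ℝ) → ℝ, ∃ g : Fin p → Fin r → M × (Fin q → ℝ) → ℝ,
      (∀ i, ∀ x ∈ U, ProdAnalyticFunAt l (f i) x) ∧
      (∀ i j, ∀ x ∈ U, ProdAnalyticFunAt l (g i j) x) ∧
      S ∩ U = ⋃ i, { x ∈ U | f i x = 0 ∧ ∀ j, 0 < g i j x }

/-- A subanalytic subset of a real analytic manifold: locally the projection of a relatively
compact semianalytic subset of `M × ℝ^q`. -/
def Subanalytic (X : Set M) : Prop :=
  ∀ a : M, ∃ U : Set M, IsOpen U ∧ a ∈ U ∧ ∃ q : ℕ, ∃ S : Set (M × (Fin q → ℝ)),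
    SemianalyticProd l S ∧ IsCompact (closure S) ∧ X ∩ U = Prod.fst '' S

/-- `S ⊆ ℝ^l` is, near the point `p`, a `k`-dimensional analytic submanifold: locally it is the
zero set of `l - k` analytic functions with linearly independent differentials. -/
def EuclidSubmanifoldAt (S : Set (Fin l → ℝ)) (k : ℕ) (p : Fin l → ℝ) : Prop :=
  k ≤ l ∧ ∃ V : Set (Fin l → ℝ), IsOpen V ∧ p ∈ V ∧
    ∃ h : Fin (l - k) → (Fin l → ℝ) → ℝ,
      (∀ i, ∀ x ∈ V, AnalyticAt ℝ (h i) x) ∧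
      (∀ x ∈ V, LinearIndependent ℝ (fun i => fderiv ℝ (h i) x)) ∧
      S ∩ V = { x ∈ V | ∀ i, h i x = 0 }

/-- `X` is, near the point `a ∈ M`, a `k`-dimensional analytic submanifold of `M`. -/
def SubmanifoldAt (X : Set M) (k : ℕ) (a : M) : Prop :=
  ∃ U : Set M, IsOpen U ∧ a ∈ U ∧ U ⊆ (chartAt (Fin l → ℝ) a).source ∧
    ∀ x ∈ X ∩ U,
      EuclidSubmanifoldAt l ((chartAt (Fin l → ℝ) a) '' (X ∩ U)) k (chartAt (Fin l → ℝ) a x)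

/-- `X^{(k)}`: the set of points of `X` near which `X` is a `k`-dimensional analytic
submanifold of `M`. -/
def smoothPts (X : Set M) (k : ℕ) : Set M :=
  { a | a ∈ X ∧ SubmanifoldAt l X k a }

/-- The dimension of a subanalytic set: the largest `k` such that `X^{(k)} ≠ ∅`
(`⊥` if there is no such `k`). -/
def sdim (X : Set M) : WithBot ℕ∞ :=
  ⨆ k ∈ { k : ℕ | (smoothPts l X k).Nonempty }, (k : WithBot ℕ∞)

/-- `Σ^{(k)}`: the closure of `X^{(k)}` intersected with `X`. -/
def strat (X : Set M) (k : ℕ) : Set M :=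
  closure (smoothPts l X k) ∩ X

/-- The germ of `X` at `a` is contained in the germ of `Y` at `a`. -/
def germSubset {M : Type*} [TopologicalSpace M] (X Y : Set M) (a : M) : Prop :=
  ∃ U ∈ 𝓝 a, X ∩ U ⊆ Y

/-- The germs of `X` and `Y` at `a` coincide. -/
def germEq {M : Type*} [TopologicalSpace M] (X Y : Set M) (a : M) : Prop :=
  ∃ U ∈ 𝓝 a, X ∩ U = Y ∩ U

/-- The dimension of the germ of `X` at `a`. -/
def germDim (X : Set M) (a : M) : WithBot ℕ∞ :=
  ⨅ U ∈ 𝓝 a, sdim l (X ∩ U)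

/-- A set `X` of pure dimension is Nash at `a` if there is a germ of a semianalytic set at `a`
containing the germ of `X` and of the same dimension. -/
def NashAtPure (X : Set M) (a : M) : Prop :=
  ∃ Y : Set M, Semianalytic l Y ∧ germSubset X Y a ∧ germDim l Y a = germDim l X a

/-- A subanalytic set `X` is Nash at `a` if each pure-dimensional part `Σ^{(k)}` of `X`
is Nash at `a`. -/
def NashAt (X : Set M) (a : M) : Prop :=
  ∀ k : ℕ, NashAtPure l (strat l X k) a

/-- `𝒩(X)`: the set of points at which `X` is Nash. -/
def NashPoints (X : Set M) : Set M :=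
  { a | NashAt l X a }

/-- `𝒮𝒜(X)`: the set of points at which the germ of `X` is semianalytic. -/
def SAPoints (X : Set M) : Set M :=
  { a | ∃ Y : Set M, Semianalytic l Y ∧ germEq X Y a }

end Real

/-! ### Admissible families of analytic germs -/

/-- The admissible family `Ψ_a(u) = Φ(φ(a)+u) − Φ(φ(a))` associated to `Φ` and `φ`. -/
def Psi {K : Type} [RCLike K] {l m n : ℕ} (Φ : (Fin m → K) → (Fin n → K))
    (φ : (Fin l → K) → (Fin m → K)) (a : Fin l → K) : (Fin m → K) → (Fin n → K) :=
  fun u => Φ (φ a + u) - Φ (φ a)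

/-- The ring `O(Λ)` of analytic functions on `Λ`: functions on `Λ` which extend to a function
analytic at every point of `Λ`. -/
def Oring {K : Type} [RCLike K] {l : ℕ} (Λ : Set (Fin l → K)) : Subring (↥Λ → K) where
  carrier := { f | ∃ g : (Fin l → K) → K, (∀ x ∈ Λ, AnalyticAt K g x) ∧ ∀ a : ↥Λ, f a = g ↑a }
  mul_mem' := by
    rintro f₁ f₂ ⟨g₁, h₁, e₁⟩ ⟨g₂, h₂, e₂⟩
    exact ⟨g₁ * g₂, fun x hx => (h₁ x hx).mul (h₂ x hx), fun a => by
      simp [Pi.mul_apply, e₁ a, e₂ a]⟩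
  one_mem' := ⟨1, fun x _ => analyticAt_const, fun a => rfl⟩
  add_mem' := by
    rintro f₁ f₂ ⟨g₁, h₁, e₁⟩ ⟨g₂, h₂, e₂⟩
    exact ⟨g₁ + g₂, fun x hx => (h₁ x hx).add (h₂ x hx), fun a => by
      simp [Pi.add_apply, e₁ a, e₂ a]⟩
  zero_mem' := ⟨0, fun x _ => analyticAt_const, fun a => rfl⟩
  neg_mem' := by
    rintro f ⟨g, h, e⟩
    exact ⟨-g, fun x hx => (h x hx).neg, fun a => by simp [Pi.neg_apply, e a]⟩

/-- The coefficient `F_{i,γ} = (1/γ!) ∂^γ (x_i ∘ Φ) ∘ φ`, as a function on `Λ`. -/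
def PsiLcoeffFun {K : Type} [RCLike K] {l m n : ℕ} (Φ : (Fin m → K) → (Fin n → K))
    (φ : (Fin l → K) → (Fin m → K)) (Λ : Set (Fin l → K)) (i : Fin n) (γ : Fin m →₀ ℕ) :
    ↥Λ → K :=
  fun a => taylorCoeff (fun w => Φ w i) (φ ↑a) γ

open scoped Classical in
/-- The coefficient `F_{i,γ}` as an element of `L = Frac(O(Λ))`. -/
def PsiLcoeff {K : Type} [RCLike K] {l m n : ℕ} (Φ : (Fin m → K) → (Fin n → K))
    (φ : (Fin l → K) → (Fin m → K)) (Λ : Set (Fin l → K)) (i : Fin n) (γ : Fin m →₀ ℕ) :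
    FractionRing ↥(Oring Λ) :=
  if h : PsiLcoeffFun Φ φ Λ i γ ∈ Oring Λ then
    algebraMap ↥(Oring Λ) (FractionRing ↥(Oring Λ)) ⟨PsiLcoeffFun Φ φ Λ i γ, h⟩
  else 0

/-- The power series `Ψ*_L(x_i) = ∑_{γ ≠ 0} F_{i,γ} u^γ ∈ L⟦u⟧`. -/
def PsiLseries {K : Type} [RCLike K] {l m n : ℕ} (Φ : (Fin m → K) → (Fin n → K))
    (φ : (Fin l → K) → (Fin m → K)) (Λ : Set (Fin l → K)) (i : Fin n) :
    MvPowerSeries (Fin m) (FractionRing ↥(Oring Λ)) :=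
  fun γ => if γ = 0 then 0 else PsiLcoeff Φ φ Λ i γ

/-- Formal partial derivative of a multivariate power series. -/
def formalPDeriv {R : Type*} [CommRing R] {m : ℕ} (i : Fin m) (F : MvPowerSeries (Fin m) R) :
    MvPowerSeries (Fin m) R :=
  fun γ => ((γ i + 1 : ℕ) : R) * F (γ + Finsupp.single i 1)

/-- The generic rank of `Ψ*_L`: the rank of the Jacobian matrix `[∂ Ψ*_L(x_j) / ∂ u_i]` over
the fraction field of `L⟦u⟧`. -/
def LgenericRank {K : Type} [RCLike K] {l m n : ℕ} (Φ : (Fin m → K) → (Fin n → K))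
    (φ : (Fin l → K) → (Fin m → K)) (Λ : Set (Fin l → K)) : ℕ :=
  (Matrix.of fun (i : Fin m) (j : Fin n) =>
    (algebraMap (MvPowerSeries (Fin m) (FractionRing ↥(Oring Λ)))
        (FractionRing (MvPowerSeries (Fin m) (FractionRing ↥(Oring Λ)))))
      (formalPDeriv i (PsiLseries Φ φ Λ j))).rank

/-- The kernel of `Ψ*_L : L⟦x⟧ → L⟦u⟧`. -/
def LformalKer {K : Type} [RCLike K] {l m n : ℕ} (Φ : (Fin m → K) → (Fin n → K))
    (φ : (Fin l → K) → (Fin m → K)) (Λ : Set (Fin l → K)) :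
    Set (MvPowerSeries (Fin n) (FractionRing ↥(Oring Λ))) :=
  { F | msubst (fun i => PsiLseries Φ φ Λ i) F = 0 }

/-- The formal rank of `Ψ*_L`: the Krull dimension of `L⟦x⟧ / ker(Ψ*_L)`. -/
def LformalRank {K : Type} [RCLike K] {l m n : ℕ} (Φ : (Fin m → K) → (Fin n → K))
    (φ : (Fin l → K) → (Fin m → K)) (Λ : Set (Fin l → K)) : WithBot ℕ∞ :=
  dimOfPrimesOver (LformalKer Φ φ Λ)

/-! ### Distinguished polynomials in `R⟦x₁,…,xₙ⟧[y]` as power series in `n+1` variables -/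

/-- Restriction of an exponent on `n+1` variables to the first `n` variables. -/
def finRestrict {n : ℕ} (γ : Fin (n+1) →₀ ℕ) : Fin n →₀ ℕ :=
  Finsupp.equivFunOnFinite.symm (fun j => γ j.castSucc)

/-- The monic polynomial `y^d + ∑_{i=0}^{d-1} (∑_β c i β x^β) y^i` — where `c i` is the
coefficient of `y^{d-1-i}` — as a power series in the `n+1` variables `(x₁,…,xₙ,y)`,
`y` being the last variable. -/
def wpoly {R : Type*} [CommRing R] {n : ℕ} (d : ℕ) (c : Fin d → (Fin n →₀ ℕ) → R) :
    MvPowerSeries (Fin (n+1)) R :=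
  fun γ =>
    if he : γ (Fin.last n) < d then c ⟨d - 1 - γ (Fin.last n), by omega⟩ (finRestrict γ)
    else if γ (Fin.last n) = d ∧ finRestrict γ = 0 then 1 else 0

open scoped Classical in
/-- An analytic function on `Λ`, viewed as an element of `L = Frac(O(Λ))`. -/
def Lelem {K : Type} [RCLike K] {l : ℕ} (Λ : Set (Fin l → K)) (g : (Fin l → K) → K) :
    FractionRing ↥(Oring Λ) :=
  if h : (fun a : ↥Λ => g ↑a) ∈ Oring Λ then
    algebraMap ↥(Oring Λ) (FractionRing ↥(Oring Λ)) ⟨fun a : ↥Λ => g ↑a, h⟩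
  else 0

/-! ### Identification of `ℂ^m` with `ℝ^{2m}` -/

/-- The standard identification `ℝ^{2m} → ℂ^m`. -/
def toC (m : ℕ) (v : Fin (2*m) → ℝ) : Fin m → ℂ :=
  fun j => (v ⟨2*j.1, by have := j.2; omega⟩ : ℝ) + (v ⟨2*j.1+1, by have := j.2; omega⟩ : ℝ) * Complex.I

/-- The standard identification `ℂ^n → ℝ^{2n}`. -/
def toR (n : ℕ) (w : Fin n → ℂ) : Fin (2*n) → ℝ :=
  fun i => if i.1 % 2 = 0 then (w ⟨i.1 / 2, by have := i.2; omega⟩).re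
           else (w ⟨i.1 / 2, by have := i.2; omega⟩).im

/-! ### Miscellaneous -/

/-- The semialgebraic diffeomorphism `x ↦ x / √(1+‖x‖²)` of `ℝⁿ` onto the open unit ball. -/
def stereo (n : ℕ) : (Fin n → ℝ) → (Fin n → ℝ) :=
  fun x i => x i / Real.sqrt (1 + ∑ j, (x j) ^ 2)

/-- A finitely subanalytic subset of `ℝⁿ`. -/
def FinitelySubanalytic (n : ℕ) (X : Set (Fin n → ℝ)) : Prop :=
  Subanalytic n (stereo n '' X)

/-- A real analytic manifold of dimension `k`, as a bundled charted space with analytic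
transition maps. -/
structure RealAnalyticManifold (k : ℕ) where
  /-- the underlying set of the manifold -/
  carrier : Type
  [topInst : TopologicalSpace carrier]
  [csInst : ChartedSpace (Fin k → ℝ) carrier]
  t2 : T2Space carrier
  analytic : AnalyticCharts ℝ k carrier

attribute [instance] RealAnalyticManifold.topInst RealAnalyticManifold.csInst

/-! ### Auxiliary: squared-Euclidean balls -/

/-- Squared Euclidean distance from `p`. -/
def q2 {n : ℕ} (p u : Fin n → ℝ) : ℝ := ∑ j, (u j - p j) ^ 2

lemma q2_self {n : ℕ} (p : Fin n → ℝ) : q2 p p = 0 := by simp [q2]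

lemma continuous_q2 {n : ℕ} (p : Fin n → ℝ) : Continuous (q2 p) := by
  apply continuous_finset_sum
  exact fun j _ => ((continuous_apply j).sub continuous_const).pow 2

lemma isOpen_q2ball {n : ℕ} (p : Fin n → ℝ) (r : ℝ) : IsOpen {u | q2 p u < r} :=
  isOpen_lt (continuous_q2 p) continuous_const

lemma q2_single_le {n : ℕ} (p u : Fin n → ℝ) (j : Fin n) : (u j - p j) ^ 2 ≤ q2 p u :=
  Finset.single_le_sum (f := fun j => (u j - p j) ^ 2) (fun i _ => sq_nonneg _)
    (Finset.mem_univ j)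

lemma abs_le_sqrt_of_q2_le {n : ℕ} {p u : Fin n → ℝ} {r : ℝ} (h : q2 p u ≤ r) (j : Fin n) :
    |u j - p j| ≤ Real.sqrt r := by
  rw [← Real.sqrt_sq_eq_abs]
  exact Real.sqrt_le_sqrt ((q2_single_le p u j).trans h)

lemma q2cball_subset_closedBall {n : ℕ} (p : Fin n → ℝ) (r : ℝ) :
    {u | q2 p u ≤ r} ⊆ Metric.closedBall p (Real.sqrt r) := by
  intro u hu
  rw [Metric.mem_closedBall]
  rw [dist_pi_le_iff (Real.sqrt_nonneg r)]
  intro j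
  rw [Real.dist_eq]
  exact abs_le_sqrt_of_q2_le hu j

lemma isCompact_q2cball {n : ℕ} (p : Fin n → ℝ) (r : ℝ) : IsCompact {u | q2 p u ≤ r} := by
  refine (isCompact_closedBall p (Real.sqrt r)).of_isClosed_subset ?_ (q2cball_subset_closedBall p r)
  exact isClosed_le (continuous_q2 p) continuous_const

/-- Inside an open set containing `p`, there is a small closed square-ball. -/
lemma exists_q2ball_subset {n : ℕ} {T : Set (Fin n → ℝ)} (hT : IsOpen T) {p : Fin n → ℝ}
    (hp : p ∈ T) : ∃ r > 0, {u | q2 p u ≤ r} ⊆ T := by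
  obtain ⟨ε, hε, hball⟩ := Metric.isOpen_iff.1 hT p hp
  refine ⟨(ε / 2) ^ 2, by positivity, fun u hu => hball ?_⟩
  rw [Metric.mem_ball]
  have h2 : dist u p ≤ Real.sqrt ((ε / 2) ^ 2) :=
    (q2cball_subset_closedBall p _) hu
  rw [Real.sqrt_sq (by positivity)] at h2
  linarith

/-- Squared-ball neighborhoods inside chart targets. -/
lemma exists_chart_q2ball {n : ℕ} {X : Type*} [TopologicalSpace X]
    [ChartedSpace (Fin n → ℝ) X] (x : X) :
    ∃ r > 0, {u | q2 (chartAt (Fin n → ℝ) x x) u ≤ r} ⊆ (chartAt (Fin n → ℝ) x).target :=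
  exists_q2ball_subset (chartAt (Fin n → ℝ) x).open_target
    ((chartAt (Fin n → ℝ) x).map_source (mem_chart_source _ x))

/-- Key composition lemma: `chart_a ∘ φ ∘ (chart_b).symm` is analytic where defined. -/
lemma analyticAt_chart_comp {l l' : ℕ} {N M : Type*}
    [TopologicalSpace N] [ChartedSpace (Fin l' → ℝ) N]
    [TopologicalSpace M] [ChartedSpace (Fin l → ℝ) M]
    (hN : AnalyticCharts ℝ l' N) (hM : AnalyticCharts ℝ l M)
    {φ : N → M} (hφ : ∀ a : N, MAnalyticAt ℝ l' l φ a)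
    (a : M) (b : N) {u : Fin l' → ℝ} (hu : u ∈ (chartAt (Fin l' → ℝ) b).target)
    (hx : φ ((chartAt (Fin l' → ℝ) b).symm u) ∈ (chartAt (Fin l → ℝ) a).source) :
    AnalyticAt ℝ (fun v => chartAt (Fin l → ℝ) a (φ ((chartAt (Fin l' → ℝ) b).symm v))) u := by
  set c := chartAt (Fin l' → ℝ) b with hc
  set y₀ := c.symm u with hy₀
  set d := chartAt (Fin l' → ℝ) y₀ with hd
  set e := chartAt (Fin l → ℝ) (φ y₀) with he
  set ψ := chartAt (Fin l → ℝ) a with hψ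
  have h1 : AnalyticAt ℝ (d ∘ c.symm) u := hN b y₀ u ⟨hu, mem_chart_source _ y₀⟩
  have h2 : AnalyticAt ℝ (chRep ℝ l' l φ y₀) (chBase ℝ l' y₀) := (hφ y₀).2
  have h3 : AnalyticAt ℝ (ψ ∘ e.symm) (e (φ y₀)) := by
    refine hM (φ y₀) a (e (φ y₀)) ⟨e.map_source (mem_chart_source _ _), ?_⟩
    simp only [Set.mem_preimage, e.left_inv (mem_chart_source _ _)]
    convert hx using 1; exact e.left_inv (mem_chart_source _ _)
  have hval : (d ∘ c.symm) u = chBase ℝ l' y₀ := rfl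
  have h21 : AnalyticAt ℝ (chRep ℝ l' l φ y₀ ∘ (d ∘ c.symm)) u := by
    refine AnalyticAt.comp ?_ h1
    rw [hval]
    exact h2
  have hval2 : (chRep ℝ l' l φ y₀ ∘ (d ∘ c.symm)) u = e (φ y₀) := by
    simp only [Function.comp, chRep, chBase]
    rw [d.left_inv (mem_chart_source _ _)]
  have h321 : AnalyticAt ℝ ((ψ ∘ e.symm) ∘ (chRep ℝ l' l φ y₀ ∘ (d ∘ c.symm))) u := by
    refine AnalyticAt.comp ?_ h21
    rw [hval2]
    exact h3
  refine h321.congr ?_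
  have hcont : ContinuousAt (c.symm) u := c.continuousAt_symm hu
  have h1' : ∀ᶠ v in 𝓝 u, c.symm v ∈ d.source :=
    hcont.eventually_mem (d.open_source.mem_nhds (mem_chart_source _ y₀))
  have hcont2 : ContinuousAt (fun v => φ (c.symm v)) u :=
    ((hφ y₀).1.comp hcont)
  have h2' : ∀ᶠ v in 𝓝 u, φ (c.symm v) ∈ e.source :=
    hcont2.eventually_mem (e.open_source.mem_nhds (mem_chart_source _ _))
  filter_upwards [h1', h2'] with v hv1 hv2
  simp only [Function.comp, chRep]
  rw [d.left_inv hv1, e.left_inv hv2]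

/-- The image of a proper analytic map between real analytic manifolds is subanalytic. -/
theorem image_of_proper_analytic_map_subanalytic (l l' : ℕ) (N M : Type*)
    [TopologicalSpace N] [ChartedSpace (Fin l' → ℝ) N] [T2Space N]
    [TopologicalSpace M] [ChartedSpace (Fin l → ℝ) M] [T2Space M]
    (hN : AnalyticCharts ℝ l' N) (hM : AnalyticCharts ℝ l M)
    (φ : N → M) (hφ : ∀ a : N, MAnalyticAt ℝ l' l φ a) (hprop : ProperMap φ) :
    Subanalytic l (Set.range φ) := by
  classical
  have hφc : Continuous φ := continuous_iff_continuousAt.2 fun y => (hφ y).1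
  intro a
  set ψ := chartAt (Fin l → ℝ) a with hψdef
  obtain ⟨r, hr, hrsub⟩ := exists_chart_q2ball (n := l) a
  -- the neighborhood U of a
  set U : Set M := ψ.source ∩ ψ ⁻¹' {v | q2 (ψ a) v < r} with hUdef
  have hUopen : IsOpen U := ψ.continuousOn.isOpen_inter_preimage ψ.open_source
    (isOpen_q2ball _ _)
  have haU : a ∈ U := ⟨mem_chart_source _ a, by simp [q2_self, hr]⟩
  -- the compact set C ⊇ closure U
  set C : Set M := ψ.symm '' {v | q2 (ψ a) v ≤ r} with hCdef
  have hCcompact : IsCompact C :=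
    (isCompact_q2cball _ _).image_of_continuousOn (ψ.symm.continuousOn.mono hrsub)
  have hCsub : C ⊆ ψ.source := by
    rintro x ⟨v, hv, rfl⟩
    exact ψ.symm.map_source (hrsub hv)
  have hUC : U ⊆ C := by
    rintro x ⟨hx1, hx2⟩
    exact ⟨ψ x, show q2 (ψ a) (ψ x) ≤ r from le_of_lt hx2, ψ.left_inv hx1⟩
  have hclUC : closure U ⊆ C := closure_minimal hUC hCcompact.isClosed
  -- compact preimage
  have hK : IsCompact (φ ⁻¹' C) := hprop C hCcompact
  -- small chart balls in N
  choose ρ hρpos hρsub using fun b : N => exists_chart_q2ball (n := l') b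
  set W : N → Set N := fun b => (chartAt (Fin l' → ℝ) b).source ∩
      (chartAt (Fin l' → ℝ) b) ⁻¹' {v | q2 (chartAt (Fin l' → ℝ) b b) v < ρ b} with hWdef
  have hWopen : ∀ b, IsOpen (W b) := fun b =>
    (chartAt (Fin l' → ℝ) b).continuousOn.isOpen_inter_preimage
      (chartAt (Fin l' → ℝ) b).open_source (isOpen_q2ball _ _)
  have hWmem : ∀ b, b ∈ W b := fun b => ⟨mem_chart_source _ b, by simp [q2_self, hρpos]⟩
  obtain ⟨t, htK, htcov⟩ := hK.elim_nhds_subcover W fun b _ => (hWopen b).mem_nhds (hWmem b)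
  -- the semianalytic set S
  set Sb : N → Set (M × (Fin l' → ℝ)) := fun b =>
    (fun y => (φ y, chartAt (Fin l' → ℝ) b y)) '' (W b ∩ φ ⁻¹' U) with hSbdef
  set S : Set (M × (Fin l' → ℝ)) := ⋃ b ∈ t, Sb b with hSdef
  refine ⟨U, hUopen, haU, l', S, ?_, ?_, ?_⟩
  · -- SemianalyticProd
    have hGb : ∀ b ∈ t, closure (Sb b) ⊆
        {w : M × (Fin l' → ℝ) | w.1 ∈ closure U ∧
          q2 (chartAt (Fin l' → ℝ) b b) w.2 ≤ ρ b ∧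
          w.1 = φ ((chartAt (Fin l' → ℝ) b).symm w.2)} := by
      intro b _
      set c := chartAt (Fin l' → ℝ) b with hcdef
      set B : Set (Fin l' → ℝ) := {v | q2 (c b) v ≤ ρ b} with hBdef
      have hBt : B ⊆ c.target := hρsub b
      have h1 : IsClosed ((Set.univ ×ˢ B) ∩
          (fun w : M × (Fin l' → ℝ) => (w.1, φ (c.symm w.2))) ⁻¹' (Set.diagonal M)) := by
        refine ContinuousOn.preimage_isClosed_of_isClosed ?_
          (isClosed_univ.prod (isClosed_le (continuous_q2 _) continuous_const)) isClosed_diagonal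
        refine ContinuousOn.prodMk continuous_fst.continuousOn ?_
        exact hφc.comp_continuousOn (c.symm.continuousOn.comp continuous_snd.continuousOn
          (fun w hw => hBt hw.2))
      have hset : {w : M × (Fin l' → ℝ) | w.1 ∈ closure U ∧ q2 (c b) w.2 ≤ ρ b ∧
          w.1 = φ (c.symm w.2)}
          = (closure U ×ˢ Set.univ) ∩ ((Set.univ ×ˢ B) ∩
            (fun w : M × (Fin l' → ℝ) => (w.1, φ (c.symm w.2))) ⁻¹' (Set.diagonal M)) := by
        ext w
        constructor
        · rintro ⟨h1', h2', h3'⟩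
          exact ⟨⟨h1', trivial⟩, ⟨trivial, h2'⟩, h3'⟩
        · rintro ⟨⟨h1', -⟩, ⟨-, h2'⟩, h3'⟩
          exact ⟨h1', h2', h3'⟩
      refine closure_minimal ?_ (by rw [hset]; exact (isClosed_closure.prod isClosed_univ).inter h1)
      rintro w ⟨y, ⟨⟨hy1, hy2⟩, hyU⟩, rfl⟩
      refine ⟨subset_closure hyU, ?_, ?_⟩
      · exact le_of_lt hy2
      · simp only
        rw [c.left_inv hy1]
    intro z
    by_cases hz : z ∈ closure S
    case neg =>
      refine ⟨(closure S)ᶜ, isClosed_closure.isOpen_compl, hz, 0, 0, Fin.elim0, Fin.elim0,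
        (fun i => i.elim0), (fun i => i.elim0), ?_⟩
      rw [Set.iUnion_of_empty]
      exact Set.eq_empty_iff_forall_notMem.2 fun w hw => hw.2 (subset_closure hw.1)
    case pos =>
      set I : Finset N := t.filter (fun b => z ∈ closure (Sb b)) with hIdef
      have hIfacts : ∀ b ∈ I, z.1 ∈ closure U ∧
          q2 (chartAt (Fin l' → ℝ) b b) z.2 ≤ ρ b ∧
          z.1 = φ ((chartAt (Fin l' → ℝ) b).symm z.2) := by
        intro b hb
        have hb' := Finset.mem_filter.1 hb
        exact hGb b hb'.1 hb'.2
      -- there is at least one good index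
      have hz' : z ∈ ⋃ b ∈ t, closure (Sb b) := by
        rw [hSdef, Finset.closure_biUnion] at hz
        exact hz
      obtain ⟨b₀, hb₀t, hb₀⟩ := Set.mem_iUnion₂.1 hz'
      have hb₀I : b₀ ∈ I := Finset.mem_filter.2 ⟨hb₀t, hb₀⟩
      have hz1 : z.1 ∈ ψ.source := hCsub (hclUC (hIfacts b₀ hb₀I).1)
      -- good neighborhoods in the chart targets of N
      set V : N → Set (Fin l' → ℝ) := fun b => (chartAt (Fin l' → ℝ) b).target ∩
          (chartAt (Fin l' → ℝ) b).symm ⁻¹' (φ ⁻¹' ψ.source) with hVdef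
      have hVopen : ∀ b, IsOpen (V b) := fun b =>
        (chartAt (Fin l' → ℝ) b).isOpen_inter_preimage_symm (ψ.open_source.preimage hφc)
      have hzV : ∀ b ∈ I, z.2 ∈ V b := by
        intro b hb
        obtain ⟨hf1, hf2, hf3⟩ := hIfacts b hb
        refine ⟨hρsub b hf2, ?_⟩
        simp only [Set.mem_preimage]
        rw [← hf3]
        exact hz1
      -- truncated (globally defined) versions of the analytic functions
      set ψt : M → Fin l → ℝ := fun x => if x ∈ ψ.source then ψ x else 0 with hψtdef
      set Ψt : N → (Fin l' → ℝ) → Fin l → ℝ :=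
        fun b v => if v ∈ V b then ψ (φ ((chartAt (Fin l' → ℝ) b).symm v)) else 0 with hΨtdef
      set F : N → M × (Fin l' → ℝ) → ℝ :=
        fun b w => ∑ j, (ψt w.1 j - Ψt b w.2 j) ^ 2 with hFdef
      set G : N → Fin 2 → M × (Fin l' → ℝ) → ℝ := fun b j w =>
        if j = 0 then ρ b - q2 (chartAt (Fin l' → ℝ) b b) w.2
        else r - q2 (ψ a) (ψt w.1) with hGdef
      set en : Fin (Fintype.card ↥I) → N := fun i => ((Fintype.equivFin ↥I).symm i : N)
        with hendef
      have hen_mem : ∀ i, en i ∈ I := fun i => ((Fintype.equivFin ↥I).symm i).2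
      have hen_surj : ∀ b ∈ I, ∃ i, en i = b := fun b hb =>
        ⟨Fintype.equivFin ↥I ⟨b, hb⟩, by simp [hendef]⟩
      -- the neighborhood of z
      set Uz : Set (M × (Fin l' → ℝ)) := (ψ.source ×ˢ ⋂ b ∈ (I : Set N), V b) ∩
          (⋃ b ∈ ((t \ I : Finset N) : Set N), closure (Sb b))ᶜ with hUzdef
      have hUzopen : IsOpen Uz := by
        refine IsOpen.inter (ψ.open_source.prod
          (I.finite_toSet.isOpen_biInter fun b _ => hVopen b)) ?_
        exact (((t \ I).finite_toSet.isClosed_biUnion fun b _ => isClosed_closure)).isOpen_compl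
      have hzUz : z ∈ Uz := by
        refine ⟨⟨hz1, Set.mem_iInter₂.2 fun b hb => hzV b hb⟩, ?_⟩
        intro hbad
        obtain ⟨b, hb, hzb⟩ := Set.mem_iUnion₂.1 hbad
        obtain ⟨hbt, hbnI⟩ := Finset.mem_sdiff.1 hb
        exact hbnI (Finset.mem_filter.2 ⟨hbt, hzb⟩)
      -- analyticity of the truncated chart map of M
      have hApsi : ∀ w : M × (Fin l' → ℝ), w ∈ Uz →
          AnalyticAt ℝ (fun y : (Fin l → ℝ) × (Fin l' → ℝ) =>
            ψt ((chartAt (Fin l → ℝ) w.1).symm y.1))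
            (chartAt (Fin l → ℝ) w.1 w.1, w.2) := by
        rintro w ⟨⟨hw1, -⟩, -⟩
        set κ := chartAt (Fin l → ℝ) w.1 with hκdef
        have hA0 : AnalyticAt ℝ (ψ ∘ κ.symm) (κ w.1) := by
          refine hM w.1 a (κ w.1) ⟨κ.map_source (mem_chart_source _ _), ?_⟩
          simp only [Set.mem_preimage]
          rw [κ.left_inv (mem_chart_source _ _)]
          exact hw1
        have hfst : AnalyticAt ℝ (Prod.fst : (Fin l → ℝ) × (Fin l' → ℝ) → Fin l → ℝ)
            (κ w.1, w.2) := (ContinuousLinearMap.fst ℝ (Fin l → ℝ) (Fin l' → ℝ)).analyticAt _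
        have hcomp : AnalyticAt ℝ ((ψ ∘ κ.symm) ∘ Prod.fst) (κ w.1, w.2) :=
          AnalyticAt.comp (x := (κ w.1, w.2)) hA0 hfst
        refine hcomp.congr ?_
        have hev : ∀ᶠ y : (Fin l → ℝ) × (Fin l' → ℝ) in 𝓝 (κ w.1, w.2),
            κ.symm y.1 ∈ ψ.source := by
          have hcf : ContinuousAt (Prod.fst : (Fin l → ℝ) × (Fin l' → ℝ) → Fin l → ℝ)
              (κ w.1, w.2) := continuousAt_fst
          have hc : ContinuousAt (κ.symm ∘ Prod.fst : (Fin l → ℝ) × (Fin l' → ℝ) → M)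
              (κ w.1, w.2) :=
            ContinuousAt.comp (x := (κ w.1, w.2))
              (κ.continuousAt_symm (κ.map_source (mem_chart_source _ _))) hcf
          refine hc.eventually_mem (ψ.open_source.mem_nhds ?_)
          show κ.symm (κ w.1) ∈ ψ.source
          rw [κ.left_inv (mem_chart_source _ _)]
          exact hw1
        filter_upwards [hev] with y hy
        simp only [Function.comp_apply, hψtdef]
        exact (if_pos hy).symm
      -- analyticity of the truncated composite map
      have hBpsi : ∀ b ∈ I, ∀ w : M × (Fin l' → ℝ), w ∈ Uz →
          AnalyticAt ℝ (fun y : (Fin l → ℝ) × (Fin l' → ℝ) => Ψt b y.2)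
            (chartAt (Fin l → ℝ) w.1 w.1, w.2) := by
        rintro b hb w ⟨⟨hw1, hw2⟩, -⟩
        have hw2' : w.2 ∈ V b := Set.mem_iInter₂.1 hw2 b hb
        have hB0 : AnalyticAt ℝ (fun v => ψ (φ ((chartAt (Fin l' → ℝ) b).symm v))) w.2 :=
          analyticAt_chart_comp hN hM hφ a b hw2'.1 hw2'.2
        have hcomp : AnalyticAt ℝ ((fun v => ψ (φ ((chartAt (Fin l' → ℝ) b).symm v))) ∘
            Prod.snd) (chartAt (Fin l → ℝ) w.1 w.1, w.2) := by
          have hsnd : AnalyticAt ℝ (Prod.snd : (Fin l → ℝ) × (Fin l' → ℝ) → Fin l' → ℝ)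
              (chartAt (Fin l → ℝ) w.1 w.1, w.2) :=
            (ContinuousLinearMap.snd ℝ (Fin l → ℝ) (Fin l' → ℝ)).analyticAt _
          exact AnalyticAt.comp (x := (chartAt (Fin l → ℝ) w.1 w.1, w.2)) hB0 hsnd
        refine hcomp.congr ?_
        have hev : ∀ᶠ y : (Fin l → ℝ) × (Fin l' → ℝ) in 𝓝 (chartAt (Fin l → ℝ) w.1 w.1, w.2),
            y.2 ∈ V b := continuousAt_snd.eventually_mem ((hVopen b).mem_nhds hw2')
        filter_upwards [hev] with y hy
        simp only [Function.comp_apply, hΨtdef]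
        exact (if_pos hy).symm
      refine ⟨Uz, hUzopen, hzUz, Fintype.card ↥I, 2, fun i => F (en i), fun i => G (en i),
        ?_, ?_, ?_⟩
      · -- analyticity of the equations
        intro i w hw
        have hb := hen_mem i
        show AnalyticAt ℝ (fun y : (Fin l → ℝ) × (Fin l' → ℝ) =>
          F (en i) ((chartAt (Fin l → ℝ) w.1).symm y.1, y.2)) (chartAt (Fin l → ℝ) w.1 w.1, w.2)
        simp only [hFdef]
        refine Finset.analyticAt_fun_sum _ fun j _ => ?_
        exact ((analyticAt_pi_iff.1 (hApsi w hw) j).sub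
          (analyticAt_pi_iff.1 (hBpsi (en i) hb w hw) j)).pow 2
      · -- analyticity of the inequalities
        intro i j w hw
        show AnalyticAt ℝ (fun y : (Fin l → ℝ) × (Fin l' → ℝ) =>
          G (en i) j ((chartAt (Fin l → ℝ) w.1).symm y.1, y.2))
          (chartAt (Fin l → ℝ) w.1 w.1, w.2)
        have hsnd : AnalyticAt ℝ (fun y : (Fin l → ℝ) × (Fin l' → ℝ) => y.2)
            (chartAt (Fin l → ℝ) w.1 w.1, w.2) :=
          (ContinuousLinearMap.snd ℝ (Fin l → ℝ) (Fin l' → ℝ)).analyticAt _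
        by_cases hj : j = 0
        · simp only [hGdef, hj, if_pos rfl, q2]
          refine analyticAt_const.sub (Finset.analyticAt_fun_sum _ fun k _ => ?_)
          exact ((analyticAt_pi_iff.1 hsnd k).sub analyticAt_const).pow 2
        · simp only [hGdef, if_neg hj, q2]
          refine analyticAt_const.sub (Finset.analyticAt_fun_sum _ fun k _ => ?_)
          exact ((analyticAt_pi_iff.1 (hApsi w hw) k).sub analyticAt_const).pow 2
      · -- the set equality
        ext w
        simp only [Set.mem_inter_iff, Set.mem_iUnion, Set.mem_setOf_eq]
        constructor
        · rintro ⟨hwS, hwUz⟩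
          obtain ⟨b, hbt, hwb⟩ := Set.mem_iUnion₂.1 hwS
          have hbI : b ∈ I := by
            by_contra hbn
            exact hwUz.2 (Set.mem_iUnion₂.2
              ⟨b, Finset.mem_sdiff.2 ⟨hbt, hbn⟩, subset_closure hwb⟩)
          obtain ⟨i, rfl⟩ := hen_surj b hbI
          obtain ⟨y, ⟨⟨hy1, hy2⟩, hyU⟩, rfl⟩ := hwb
          have hyU1 : φ y ∈ ψ.source := hyU.1
          have hyU2 : q2 (ψ a) (ψ (φ y)) < r := hyU.2
          have h1 : ψt (φ y) = ψ (φ y) := if_pos hyU1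
          have hcy : chartAt (Fin l' → ℝ) (en i) y ∈ V (en i) := by
            refine ⟨(chartAt (Fin l' → ℝ) (en i)).map_source hy1, ?_⟩
            simp only [Set.mem_preimage]
            rw [(chartAt (Fin l' → ℝ) (en i)).left_inv hy1]
            exact hyU1
          have h2 : Ψt (en i) (chartAt (Fin l' → ℝ) (en i) y) = ψ (φ y) := by
            simp only [hΨtdef, if_pos hcy]
            rw [(chartAt (Fin l' → ℝ) (en i)).left_inv hy1]
          refine ⟨i, hwUz, ?_, ?_⟩
          · simp [hFdef, h1, h2]
          · intro j
            by_cases hj : j = 0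
            · simp only [hGdef, hj, if_pos rfl]
              have : q2 (chartAt (Fin l' → ℝ) (en i) (en i))
                  (chartAt (Fin l' → ℝ) (en i) y) < ρ (en i) := hy2
              linarith
            · simp only [hGdef, if_neg hj, h1]
              linarith
        · rintro ⟨i, hwUz, hF0, hGpos⟩
          have hbI := hen_mem i
          obtain ⟨⟨hw1, hw2⟩, hw3⟩ := hwUz
          have hw2' : w.2 ∈ V (en i) := Set.mem_iInter₂.1 hw2 (en i) hbI
          have hxsrc : φ ((chartAt (Fin l' → ℝ) (en i)).symm w.2) ∈ ψ.source := hw2'.2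
          have hF0' : ∑ j, (ψt w.1 j - Ψt (en i) w.2 j) ^ 2 = 0 := by
            have := hF0
            simp only [hFdef] at this
            exact this
          have hterm : ∀ j, ψt w.1 j - Ψt (en i) w.2 j = 0 := fun j =>
            sq_eq_zero_iff.1 ((Finset.sum_eq_zero_iff_of_nonneg
              (fun k _ => sq_nonneg _)).1 hF0' j (Finset.mem_univ j))
          have hψt1 : ψt w.1 = ψ w.1 := if_pos hw1
          have hΨt1 : Ψt (en i) w.2 = ψ (φ ((chartAt (Fin l' → ℝ) (en i)).symm w.2)) :=
            if_pos hw2'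
          have hxeq : w.1 = φ ((chartAt (Fin l' → ℝ) (en i)).symm w.2) := by
            refine ψ.injOn hw1 hxsrc (funext fun j => ?_)
            have := hterm j
            rw [hψt1, hΨt1] at this
            linarith [congrFun hψt1 j]
          have hg0 := hGpos 0
          have hg1 := hGpos 1
          simp only [hGdef, if_pos rfl] at hg0
          have h10 : (1 : Fin 2) ≠ 0 := by decide
          simp only [hGdef, if_neg h10] at hg1
          rw [hψt1] at hg1
          -- w.2 lies in the chart target
          have hw2t : w.2 ∈ (chartAt (Fin l' → ℝ) (en i)).target := hw2'.1
          set y := (chartAt (Fin l' → ℝ) (en i)).symm w.2 with hydef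
          have hys : y ∈ (chartAt (Fin l' → ℝ) (en i)).source :=
            (chartAt (Fin l' → ℝ) (en i)).map_target hw2t
          have hcy : chartAt (Fin l' → ℝ) (en i) y = w.2 :=
            (chartAt (Fin l' → ℝ) (en i)).right_inv hw2t
          have hyW : y ∈ W (en i) := by
            refine ⟨hys, ?_⟩
            show q2 _ (chartAt (Fin l' → ℝ) (en i) y) < ρ (en i)
            rw [hcy]
            linarith
          have hyU : φ y ∈ U := by
            refine ⟨?_, ?_⟩
            · rw [← hxeq]; exact hw1
            · show q2 (ψ a) (ψ (φ y)) < r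
              rw [← hxeq]
              linarith
          refine ⟨?_, ⟨hw1, hw2⟩, hw3⟩
          refine Set.mem_iUnion₂.2 ⟨en i, (Finset.mem_filter.1 hbI).1, ⟨y, ⟨hyW, hyU⟩, ?_⟩⟩
          exact Prod.ext (show φ y = w.1 from hxeq.symm)
            (show chartAt (Fin l' → ℝ) (en i) y = w.2 from hcy)

  · -- compact closure
    set D : Set (Fin l' → ℝ) := ⋃ b ∈ t, {v | q2 (chartAt (Fin l' → ℝ) b b) v ≤ ρ b} with hDdef
    have hD : IsCompact D := t.finite_toSet.isCompact_biUnion fun b _ => isCompact_q2cball _ _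
    have hSsub : S ⊆ C ×ˢ D := by
      rintro w hw
      simp only [hSdef, Set.mem_iUnion] at hw
      obtain ⟨b, hbt, hwb⟩ := hw
      obtain ⟨y, ⟨⟨hy1, hy2⟩, hyU⟩, rfl⟩ := hwb
      refine ⟨hUC hyU, ?_⟩
      simp only [hDdef, Set.mem_iUnion]
      exact ⟨b, hbt, show q2 _ _ ≤ _ from le_of_lt hy2⟩
    exact (hCcompact.prod hD).of_isClosed_subset isClosed_closure
      (closure_minimal hSsub (hCcompact.prod hD).isClosed)
  · -- range φ ∩ U = fst '' S
    ext x
    constructor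
    · rintro ⟨⟨y, rfl⟩, hyU⟩
      have hyK : y ∈ φ ⁻¹' C := hUC hyU
      obtain ⟨b, hbt, hyb⟩ := Set.mem_iUnion₂.1 (htcov hyK)
      exact ⟨(φ y, chartAt (Fin l' → ℝ) b y), Set.mem_iUnion₂.2 ⟨b, hbt, ⟨y, ⟨hyb, hyU⟩, rfl⟩⟩, rfl⟩
    · rintro ⟨w, hw, rfl⟩
      obtain ⟨b, _, ⟨y, ⟨_, hyU⟩, rfl⟩⟩ := Set.mem_iUnion₂.1 hw
      exact ⟨⟨y, rfl⟩, hyU⟩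

end Paper
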